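/- (Conrad's criterion) A group G is left-orderable if and only if for every finite subset {x₁, …, xₙ} of G not containing the identity element, there exist signs ε₁, …, εₙ ∈ {+1, −1} such that the identity element of G does not belong to the subsemigroup of G generated by {x₁^{ε₁}, …, xₙ^{εₙ}} (the set of all nonempty products of these elements, inverses not allowed). -/

import Mathlib

/-- A group is left-orderable if it admits a strict linear order invariant under
left multiplication. -/
def LeftOrderable (G : Type*) [Group G] : Prop :=
  ∃ r : G → G → Prop, IsStrictTotalOrder G r ∧ ∀ f g h : G, r g h → r (f * g) (f * h)

lemma mem_closure_image_finset' {G : Type*} [Semigroup G] {f : G → G} {A : Set G} {a : G}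
    (h : a ∈ Subsemigroup.closure (f '' A)) :
    ∃ s : Finset G, ↑s ⊆ A ∧ a ∈ Subsemigroup.closure (f '' ↑s) := by
  classical
  induction h using Subsemigroup.closure_induction with
  | mem x hx =>
    obtain ⟨y, hy, rfl⟩ := hx
    exact ⟨{y}, by simpa, Subsemigroup.subset_closure ⟨y, by simp⟩⟩
  | mul x y hx hy ihx ihy =>
    obtain ⟨s, hs, hxs⟩ := ihx
    obtain ⟨t, ht, hyt⟩ := ihy
    refine ⟨s ∪ t, ?_, mul_mem ?_ ?_⟩
    · simp only [Finset.coe_union, Set.union_subset_iff]; exact ⟨hs, ht⟩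
    · exact Subsemigroup.closure_mono (Set.image_mono  (by simp [Finset.coe_union])) hxs
    · exact Subsemigroup.closure_mono (Set.image_mono  (by simp [Finset.coe_union])) hyt

/-- Conrad's criterion: a group `G` is left-orderable iff for every
finite subset of `G` not containing `1` there is a choice of signs `ε i = ±1`
such that `1` is not in the subsemigroup generated by the elements `xᵢ ^ (ε i)`. -/
theorem leftOrderable_iff_conrad_criterion {G : Type*} [Group G] :
    LeftOrderable G ↔
      ∀ s : Finset G, (1 : G) ∉ s →
        ∃ ε : G → ℤ, (∀ x ∈ s, ε x = 1 ∨ ε x = -1) ∧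
          (1 : G) ∉ Subsemigroup.closure ((fun x => x ^ ε x) '' ↑s) := by
  classical
  constructor
  · rintro ⟨r, hsto, hinv⟩ s hs
    refine ⟨fun x => if r 1 x then 1 else -1, fun x _ => by by_cases h : r 1 x <;> simp [h], ?_⟩
    -- the positive cone subsemigroup
    have hmul : ∀ a b : G, r 1 a → r 1 b → r 1 (a * b) := by
      intro a b ha hb
      have := hinv a 1 b hb
      rw [mul_one] at this
      exact hsto.trans 1 a (a * b) ha this
    set Q : Subsemigroup G := ⟨{y | r 1 y}, fun {a} {b} ha hb => hmul a b ha hb⟩ with hQ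
    intro hmem
    have hsub : Subsemigroup.closure ((fun x => x ^ if r 1 x then (1:ℤ) else -1) '' ↑s) ≤ Q := by
      rw [Subsemigroup.closure_le]
      rintro y ⟨x, hx, rfl⟩
      by_cases h1 : r 1 x
      · have : x ^ (if r 1 x then (1:ℤ) else -1) = x := by simp [h1]
        show x ^ (if r 1 x then (1:ℤ) else -1) ∈ Q
        rw [this]; exact h1
      · have hne : x ≠ 1 := fun h => hs (h ▸ hx)
        have hx1 : r x 1 := by
          by_contra hc
          exact hne (hsto.trichotomous 1 x h1 hc).symm
        have := hinv x⁻¹ x 1 hx1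
        rw [inv_mul_cancel, mul_one] at this
        have he : x ^ (if r 1 x then (1:ℤ) else -1) = x⁻¹ := by simp [h1]
        show x ^ (if r 1 x then (1:ℤ) else -1) ∈ Q
        rw [he]; exact this
    exact hsto.irrefl 1 (hsub hmem)
  · intro H
    -- compactness
    set ι := {s : Finset G // (1 : G) ∉ s} with hι
    set E : (G → Bool) → G → ℤ := fun ε x => if ε x then 1 else -1 with hE
    set C : ι → Set (G → Bool) := fun s =>
      {ε | (1 : G) ∉ Subsemigroup.closure ((fun x => x ^ E ε x) '' ↑s.1)} with hC
    have hclosed : ∀ s, IsClosed (C s) := by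
      intro s
      rw [← isOpen_compl_iff]
      rw [isOpen_iff_forall_mem_open]
      intro ε hε
      refine ⟨⋂ x ∈ s.1, (fun ε' : G → Bool => ε' x) ⁻¹' {ε x}, ?_, ?_, by simp⟩
      · intro ε' hε'
        simp only [Set.mem_iInter, Set.mem_preimage, Set.mem_singleton_iff] at hε'
        simp only [Set.mem_compl_iff, hC, Set.mem_setOf_eq, not_not] at hε ⊢
        have : ((fun x => x ^ E ε' x) '' ↑s.1) = ((fun x => x ^ E ε x) '' ↑s.1) :=
          Set.image_congr fun a ha => by simp [hE, hε' a ha]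
        rwa [this]
      · exact isOpen_biInter_finset fun x _ =>
          (isOpen_discrete _).preimage (continuous_apply x)
    have hne : ∀ s, (C s).Nonempty := by
      rintro ⟨s, hs⟩
      obtain ⟨ε, hε1, hε2⟩ := H s hs
      refine ⟨fun x => ε x = 1, ?_⟩
      simp only [hC, Set.mem_setOf_eq]
      have : ((fun x => x ^ E (fun x => decide (ε x = 1)) x) '' ↑s) = ((fun x => x ^ ε x) '' ↑s) := by
        refine Set.image_congr fun a ha => ?_
        rcases hε1 a ha with h | h <;> simp [hE, h]
      rwa [this]
    have hdir : Directed (· ⊇ ·) C := by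
      rintro ⟨s, hs⟩ ⟨t, ht⟩
      refine ⟨⟨s ∪ t, by simp [hs, ht]⟩, ?_, ?_⟩ <;>
      · intro ε hε
        simp only [hC, Set.mem_setOf_eq] at hε ⊢
        intro hx
        exact hε (Subsemigroup.closure_mono (Set.image_mono  (by simp [Finset.coe_union])) hx)
    have : (⋂ s, C s).Nonempty := by
      haveI : Nonempty ι := ⟨⟨∅, by simp⟩⟩
      exact IsCompact.nonempty_iInter_of_directed_nonempty_isCompact_isClosed C hdir hne
        (fun s => (hclosed s).isCompact) hclosed
    obtain ⟨ε, hε⟩ := this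
    simp only [Set.mem_iInter] at hε
    -- positive cone
    set P : Subsemigroup G := Subsemigroup.closure ((fun x => x ^ E ε x) '' {x : G | x ≠ 1})
      with hP
    have h1P : (1 : G) ∉ P := by
      intro h
      obtain ⟨s, hsA, hmem⟩ := mem_closure_image_finset' h
      have hs1 : (1 : G) ∉ s := fun h1 => (hsA h1) rfl
      exact hε ⟨s, hs1⟩ hmem
    have hcone : ∀ x : G, x ≠ 1 → x ∈ P ∨ x⁻¹ ∈ P := by
      intro x hx
      have : x ^ E ε x ∈ P := Subsemigroup.subset_closure ⟨x, hx, rfl⟩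
      by_cases h : ε x
      · left; simpa [hE, h] using this
      · right; rw [← zpow_neg_one]; simpa [hE, h] using this
    have hasymm : ∀ x : G, x ∈ P → x⁻¹ ∈ P → False := by
      intro x hx hxi
      have : (1 : G) ∈ P := by simpa using mul_mem hx hxi
      exact h1P this
    refine ⟨fun g h => g⁻¹ * h ∈ P, ?_, fun f g h hr => by simpa [mul_assoc] using hr⟩
    haveI : IsTrichotomous G (fun g h => g⁻¹ * h ∈ P) := by
      constructor
      intro g h
      by_cases hgh : g = h
      · exact fun _ _ => hgh
      · have hne : g⁻¹ * h ≠ 1 := by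
          intro e
          apply hgh
          have := congrArg (g * ·) e
          simpa using this.symm
        rcases hcone _ hne with h1 | h1
        · exact fun hn _ => absurd h1 hn
        · exact fun _ hn => absurd (by simpa [mul_inv_rev] using h1) hn
    haveI : IsIrrefl G (fun g h => g⁻¹ * h ∈ P) := by
      constructor
      intro g hg
      exact h1P (by simpa using hg)
    haveI : IsTrans G (fun g h => g⁻¹ * h ∈ P) := by
      constructor
      intro a b c hab hbc
      have := mul_mem hab hbc
      simpa [mul_assoc] using this
    haveI : IsStrictOrder G (fun g h => g⁻¹ * h ∈ P) := ⟨⟩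
    exact ⟨⟩
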